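/- arXiv:1808.10734 — 4 statements merged into one kernel-verified Lean document; each statement's English description precedes it below -/
import Mathlib

section
/- For all real z with 0 ≤ z ≤ 1, (1+z)·ln(4(z+1)/(z+4)) + (1−z)·ln((z+4)/4) − z ≤ 0. -/
lemma aux_hasDeriv (y : ℝ) (hy : (0:ℝ) ≤ y) :
    HasDerivAt (fun t : ℝ => t * (6 + t) / (6 + 4 * t) - Real.log (1 + t))
      (((1 * (6 + y) + y * 1) * (6 + 4 * y) - y * (6 + y) * (4 * 1)) / (6 + 4 * y) ^ 2
        - (1 / (1 + y))) y := by
  have h1 : (6 + 4 * y) ≠ 0 := by nlinarith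
  have h2 : (1 + y) ≠ 0 := by nlinarith
  have hnum : HasDerivAt (fun t : ℝ => t * (6 + t)) (1 * (6 + y) + y * 1) y :=
    (hasDerivAt_id y).mul ((hasDerivAt_id y).const_add 6)
  have hden : HasDerivAt (fun t : ℝ => 6 + 4 * t) (4 * 1) y :=
    ((hasDerivAt_id y).const_mul 4).const_add 6
  have hq := hnum.div hden h1
  have hlog : HasDerivAt (fun t : ℝ => Real.log (1 + t)) (1 / (1 + y)) y := by
    have := (Real.hasDerivAt_log h2).comp y ((hasDerivAt_id y).const_add 1)
    simpa [Function.comp_def] using this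
  exact hq.sub hlog

lemma log_upper (x : ℝ) (hx : 0 ≤ x) : Real.log (1 + x) ≤ x * (6 + x) / (6 + 4 * x) := by
  set F : ℝ → ℝ := fun t => t * (6 + t) / (6 + 4 * t) - Real.log (1 + t) with hF
  have hmono : MonotoneOn F (Set.Ici (0:ℝ)) := by
    apply monotoneOn_of_deriv_nonneg (convex_Ici 0)
    · intro y hy
      exact ((aux_hasDeriv y hy).continuousAt).continuousWithinAt
    · intro y hy
      rw [interior_Ici] at hy
      exact (aux_hasDeriv y (le_of_lt hy)).differentiableAt.differentiableWithinAt
    · intro y hy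
      rw [interior_Ici] at hy
      replace hy : 0 < y := hy
      rw [(aux_hasDeriv y (le_of_lt hy)).deriv]
      have h1 : (0:ℝ) < 6 + 4 * y := by linarith
      have h2 : (0:ℝ) < 1 + y := by linarith
      rw [sub_nonneg, div_le_div_iff₀ h2 (by positivity)]
      nlinarith [pow_nonneg (le_of_lt hy) 3]
  have h0 : F 0 = 0 := by simp [hF]
  have := hmono (Set.self_mem_Ici) (Set.mem_Ici.mpr hx) hx
  rw [h0] at this
  simpa [hF, sub_nonneg] using this

theorem stmt_1 (z : ℝ) (h0 : 0 ≤ z) (h1 : z ≤ 1) :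
    (1 + z) * Real.log (4 * (z + 1) / (z + 4)) + (1 - z) * Real.log ((z + 4) / 4) - z ≤ 0 := by
  have hz1 : (0:ℝ) < z + 1 := by linarith
  have hz4 : (0:ℝ) < z + 4 := by linarith
  have hsplit : Real.log (4 * (z + 1) / (z + 4)) = Real.log (z + 1) - Real.log ((z + 4) / 4) := by
    rw [show 4 * (z + 1) / (z + 4) = (z + 1) / ((z + 4) / 4) by field_simp]
    rw [Real.log_div (ne_of_gt hz1) (by positivity)]
  have hup : Real.log (z + 1) ≤ z * (6 + z) / (6 + 4 * z) := by
    have := log_upper z h0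
    rwa [show (1:ℝ) + z = z + 1 by ring] at this
  have hlow : z / (z + 4) ≤ Real.log ((z + 4) / 4) := by
    have h := Real.one_sub_inv_le_log_of_pos (x := (z + 4) / 4) (by positivity)
    have e : 1 - ((z + 4) / 4)⁻¹ = z / (z + 4) := by
      field_simp
      ring
    linarith [e ▸ h]
  have key : (1 + z) * (z * (6 + z) / (6 + 4 * z)) - 2 * z * (z / (z + 4)) - z ≤ 0 := by
    have e : (1 + z) * (z * (6 + z) / (6 + 4 * z)) - 2 * z * (z / (z + 4)) - z
        = z ^ 3 * (z - 1) / ((6 + 4 * z) * (z + 4)) := by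
      field_simp
      ring
    rw [e]
    apply div_nonpos_of_nonpos_of_nonneg
    · nlinarith [pow_nonneg h0 3]
    · positivity
  rw [hsplit]
  nlinarith [mul_le_mul_of_nonneg_left hup (by linarith : (0:ℝ) ≤ 1 + z),
    mul_le_mul_of_nonneg_left hlow (by linarith : (0:ℝ) ≤ 2 * z)]
end

section
/- For all real z ≥ 0, ln(16(z+1)/(z+4)²) − 2z/(z+4) ≤ 0. -/
theorem stmt_2 (z : ℝ) (hz : 0 ≤ z) :
    Real.log (16 * (z + 1) / (z + 4) ^ 2) - 2 * z / (z + 4) ≤ 0 := by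
  have h4 : (0:ℝ) < z + 4 := by linarith
  have hpos : (0:ℝ) < 16 * (z + 1) / (z + 4) ^ 2 := by positivity
  have hlog := Real.log_le_sub_one_of_pos hpos
  have key : 16 * (z + 1) / (z + 4) ^ 2 - 1 - 2 * z / (z + 4) ≤ 0 := by
    rw [div_sub' (by positivity), div_sub_div _ _ (by positivity) h4.ne', div_nonpos_iff]
    right
    constructor
    · nlinarith [mul_nonneg (mul_nonneg hz hz) h4.le]
    · positivity
  linarith
end

section
/- Define h(σ) = 4/(4+σ). For every z with 0 ≤ z ≤ 1, ∫_z^1 max{0, h(σ) − 1 + z·h(σ)} dσ + ∫_0^z (h(σ) − 1 − z·h(σ)) dσ ≤ 0. -/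
open Real intervalIntegral
set_option maxHeartbeats 2000000

lemma log_cubic {x : ℝ} (hx : 0 ≤ x) : Real.log (1 + x) ≤ x - x^2/2 + x^3/3 := by
  have h1 : (0:ℝ) < 1 + x := by linarith
  have hlog : Real.log (1 + x) = ∫ t in (1:ℝ)..(1+x), t⁻¹ := by
    rw [integral_inv (by
      intro hmem
      rw [Set.uIcc_of_le (by linarith)] at hmem
      exact absurd hmem.1 (by norm_num)), div_one]
  rw [hlog]
  have hle : (∫ t in (1:ℝ)..(1+x), t⁻¹) ≤ ∫ t in (1:ℝ)..(1+x), (t^2 - 3*t + 3) := by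
    apply intervalIntegral.integral_mono_on (by linarith)
    · apply ContinuousOn.intervalIntegrable
      apply ContinuousOn.inv₀ continuousOn_id
      intro t ht
      rw [Set.uIcc_of_le (by linarith)] at ht
      simp only [id_eq]
      intro h0; rw [h0] at ht; exact absurd ht.1 (by norm_num)
    · apply Continuous.intervalIntegrable; continuity
    · intro t ht
      have h1t : (1:ℝ) ≤ t := ht.1
      rw [inv_le_iff_one_le_mul₀ (by linarith)]
      nlinarith [pow_nonneg (by linarith : (0:ℝ) ≤ t - 1) 3]
  refine hle.trans ?_
  have heq : (∫ t in (1:ℝ)..(1+x), (t^2 - 3*t + 3)) =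
      ((1+x)^3/3 - 3*(1+x)^2/2 + 3*(1+x)) - ((1:ℝ)^3/3 - 3*(1:ℝ)^2/2 + 3*1) := by
    apply intervalIntegral.integral_eq_sub_of_hasDerivAt (f := fun t => t^3/3 - 3*t^2/2 + 3*t)
    · intro t _
      have := (((hasDerivAt_pow 3 t).div_const 3).sub
        (((hasDerivAt_pow 2 t).const_mul 3).div_const 2)).add ((hasDerivAt_id t).const_mul 3)
      convert this using 1
      · funext s; simp only [Pi.add_apply, Pi.sub_apply, id]
      · norm_num <;> ring
    · apply Continuous.intervalIntegrable; continuity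
  rw [heq]; ring_nf; nlinarith [sq_nonneg x]

lemma cont_inv4 {a b : ℝ} (ha : 0 ≤ a) (hb : 0 ≤ b) {c : ℝ} :
    ContinuousOn (fun σ : ℝ => c * (4+σ)⁻¹) (Set.uIcc a b) := by
  apply ContinuousOn.mul continuousOn_const ?_
  apply ContinuousOn.inv₀ (by fun_prop)
  intro t ht
  rw [Set.uIcc_eq_union] at ht
  have hat : a ⊓ b ≤ t := by
    rcases ht with ht|ht
    · exact le_trans inf_le_left ht.1
    · exact le_trans inf_le_right ht.1
  have h0 : (0:ℝ) < 4 + t := by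
    have := le_inf ha hb
    linarith [le_trans this hat]
  exact h0.ne'

lemma int_inv4 {a b : ℝ} (ha : 0 ≤ a) (hb : 0 ≤ b) :
    (∫ σ in a..b, (4+σ)⁻¹) = Real.log (4+b) - Real.log (4+a) := by
  have := intervalIntegral.integral_comp_add_left (a := a) (b := b) (fun x => x⁻¹) 4
  rw [this, integral_inv, Real.log_div (by linarith) (by linarith)]
  intro hmem
  rcases Set.mem_uIcc.1 hmem with ⟨h1,_⟩|⟨h1,_⟩ <;> linarith

lemma int_lin {a b c d : ℝ} (ha : 0 ≤ a) (hb : 0 ≤ b) :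
    (∫ σ in a..b, (c * (4+σ)⁻¹ + d)) =
      c * (Real.log (4+b) - Real.log (4+a)) + d * (b - a) := by
  rw [intervalIntegral.integral_add
      ((cont_inv4 ha hb (c := c)).intervalIntegrable) (intervalIntegrable_const),
    intervalIntegral.integral_const_mul, int_inv4 ha hb, intervalIntegral.integral_const]
  simp [smul_eq_mul]; ring

theorem stmt_6 (h : ℝ → ℝ) (hh : ∀ σ, h σ = 4 / (4 + σ))
    (z : ℝ) (hz0 : 0 ≤ z) (hz1 : z ≤ 1) :
    (∫ σ in z..1, max 0 (h σ - 1 + z * h σ)) + ∫ σ in (0:ℝ)..z, (h σ - 1 - z * h σ) ≤ 0 := by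
  -- rewrite second integral
  have hfun2 : ∀ σ : ℝ, h σ - 1 - z * h σ = (4*(1-z)) * (4+σ)⁻¹ + (-1) := by
    intro σ; rw [hh, div_eq_mul_inv]; ring
  have I2 : (∫ σ in (0:ℝ)..z, (h σ - 1 - z * h σ))
      = 4*(1-z) * (Real.log (4+z) - Real.log 4) - z := by
    simp only [hfun2]
    rw [int_lin le_rfl hz0]; ring
  -- set up log bounds
  have hb : (0:ℝ) ≤ z/4 := by linarith
  have hlogb : Real.log (4+z) - Real.log 4 ≤ z/4 - (z/4)^2/2 + (z/4)^3/3 := by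
    have h1 : Real.log (4+z) - Real.log 4 = Real.log (1 + z/4) := by
      rw [show (1:ℝ) + z/4 = (4+z)/4 by ring, Real.log_div (by linarith) (by norm_num)]
    rw [h1]; exact log_cubic hb
  rcases le_total 1 (4*z) with h14 | h14
  · -- Case A : 1/4 ≤ z
    have I1 : (∫ σ in z..1, max 0 (h σ - 1 + z * h σ))
        = 4*(1+z) * (Real.log 5 - Real.log (4+z)) - (1 - z) := by
      rw [intervalIntegral.integral_congr (g := fun σ => (4*(1+z)) * (4+σ)⁻¹ + (-1)) ?_]
      · rw [int_lin hz0 (by norm_num)]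
        norm_num; ring
      · intro σ hσ
        rw [Set.uIcc_of_le hz1] at hσ
        have h4σ : (0:ℝ) < 4 + σ := by linarith [hσ.1]
        have hv : h σ - 1 + z * h σ = (4*(1+z)) * (4+σ)⁻¹ + (-1) := by
          rw [hh, div_eq_mul_inv]; ring
        show max 0 (h σ - 1 + z * h σ) = (4*(1+z)) * (4+σ)⁻¹ + (-1)
        rw [hv, max_eq_right]
        have h5 : (1:ℝ) ≤ 4*(1+z) * (4+σ)⁻¹ := by
          rw [show 4*(1+z) * (4+σ)⁻¹ = (4*(1+z))/(4+σ) from (div_eq_mul_inv _ _).symm,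
            le_div_iff₀ h4σ]
          nlinarith [hσ.2]
        linarith
    rw [I1, I2]
    have h4z : (0:ℝ) < 4 + z := by linarith
    have hne : (4+z) ≠ 0 := h4z.ne'
    set u : ℝ := (1-z)/(4+z) with hu_def
    have hu : 0 ≤ u := div_nonneg (by linarith) (by linarith)
    have hloga : Real.log 5 - Real.log (4+z) ≤ u - u^2/2 + u^3/3 := by
      have h1 : Real.log 5 - Real.log (4+z) = Real.log (1 + u) := by
        rw [hu_def, show (1:ℝ) + (1-z)/(4+z) = 5/(4+z) by field_simp; norm_num,
          Real.log_div (by norm_num) (by linarith)]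
      rw [h1]; exact log_cubic hu
    have key : 4*(1+z)*(u - u^2/2 + u^3/3) + 4*(1-z)*(z/4 - (z/4)^2/2 + (z/4)^3/3) ≤ 1 := by
      have heq : 1 - (4*(1+z)*(u - u^2/2 + u^3/3) + 4*(1-z)*(z/4 - (z/4)^2/2 + (z/4)^3/3))
          = (1280 - 9856*z + 16512*z^2 + 13248*z^3 + 2720*z^4 + 72*z^5 + 20*z^6 + 4*z^7)
            / (192*(4+z)^3) := by
        rw [hu_def]; field_simp; ring
      have hnum : (0:ℝ) ≤ 1280 - 9856*z + 16512*z^2 + 13248*z^3 + 2720*z^4 + 72*z^5 + 20*z^6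
          + 4*z^7 := by
        nlinarith [mul_nonneg (by linarith : (0:ℝ) ≤ 4*z - 1) (sq_nonneg z), sq_nonneg (z - 1/4),
          pow_nonneg hz0 4, pow_nonneg hz0 5, pow_nonneg hz0 6, pow_nonneg hz0 7,
          sq_nonneg (z - 1/2), mul_nonneg hz0 hz0]
      nlinarith [div_nonneg hnum (by positivity : (0:ℝ) ≤ 192*(4+z)^3)]
    have hm1 := mul_le_mul_of_nonneg_left hloga (by linarith : (0:ℝ) ≤ 4*(1+z))
    have hm2 := mul_le_mul_of_nonneg_left hlogb (by linarith : (0:ℝ) ≤ 4*(1-z))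
    linarith
  · -- Case B : z ≤ 1/4
    have hfe : (fun σ : ℝ => max 0 (h σ - 1 + z * h σ))
        = fun σ : ℝ => max 0 ((4*(1+z)) * (4+σ)⁻¹ + (-1)) := by
      funext σ
      rw [hh, div_eq_mul_inv]
      ring_nf
    have hint : ∀ a b : ℝ, 0 ≤ a → 0 ≤ b →
        IntervalIntegrable (fun σ : ℝ => max 0 ((4*(1+z)) * (4+σ)⁻¹ + (-1)))
          MeasureTheory.volume a b := by
      intro a b ha hb
      exact (ContinuousOn.sup continuousOn_const
        ((cont_inv4 ha hb).add continuousOn_const)).intervalIntegrable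
    have hsplit : (∫ σ in z..1, max 0 (h σ - 1 + z * h σ))
        = (∫ σ in z..(4*z), max 0 ((4*(1+z)) * (4+σ)⁻¹ + (-1)))
          + ∫ σ in (4*z)..1, max 0 ((4*(1+z)) * (4+σ)⁻¹ + (-1)) := by
      rw [hfe, intervalIntegral.integral_add_adjacent_intervals
        (hint z (4*z) hz0 (by linarith)) (hint (4*z) 1 (by linarith) (by norm_num))]
    have J1 : (∫ σ in z..(4*z), max 0 ((4*(1+z)) * (4+σ)⁻¹ + (-1)))
        = 4*(1+z) * (Real.log (4+4*z) - Real.log (4+z)) - 3*z := by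
      rw [intervalIntegral.integral_congr (g := fun σ => (4*(1+z)) * (4+σ)⁻¹ + (-1)) ?_]
      · rw [int_lin hz0 (by linarith)]; ring
      · intro σ hσ
        rw [Set.uIcc_of_le (by linarith : z ≤ 4*z)] at hσ
        have h4σ : (0:ℝ) < 4 + σ := by linarith [hσ.1]
        show max 0 ((4*(1+z)) * (4+σ)⁻¹ + (-1)) = (4*(1+z)) * (4+σ)⁻¹ + (-1)
        rw [max_eq_right]
        have h5 : (1:ℝ) ≤ 4*(1+z) * (4+σ)⁻¹ := by
          rw [show 4*(1+z) * (4+σ)⁻¹ = (4*(1+z))/(4+σ) from (div_eq_mul_inv _ _).symm,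
            le_div_iff₀ h4σ]
          nlinarith [hσ.2]
        linarith
    have J2 : (∫ σ in (4*z)..1, max 0 ((4*(1+z)) * (4+σ)⁻¹ + (-1))) = 0 := by
      rw [intervalIntegral.integral_congr (g := fun _ => (0:ℝ)) ?_, intervalIntegral.integral_zero]
      intro σ hσ
      rw [Set.uIcc_of_le (by linarith : 4*z ≤ 1)] at hσ
      have h4σ : (0:ℝ) < 4 + σ := by linarith [hz0, hσ.1]
      show max 0 ((4*(1+z)) * (4+σ)⁻¹ + (-1)) = 0
      rw [max_eq_left]
      have h5 : 4*(1+z) * (4+σ)⁻¹ ≤ 1 := by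
        rw [show 4*(1+z) * (4+σ)⁻¹ = (4*(1+z))/(4+σ) from (div_eq_mul_inv _ _).symm,
          div_le_one h4σ]
        nlinarith [hσ.1]
      linarith
    rw [hsplit, J1, J2, I2]
    have h4z : (0:ℝ) < 4 + z := by linarith
    have hne : (4+z) ≠ 0 := h4z.ne'
    set a : ℝ := 3*z/(4+z) with ha_def
    have ha : 0 ≤ a := by positivity
    have hloga : Real.log (4+4*z) - Real.log (4+z) ≤ a - a^2/2 + a^3/3 := by
      have h1 : Real.log (4+4*z) - Real.log (4+z) = Real.log (1 + a) := by
        rw [ha_def, show (1:ℝ) + 3*z/(4+z) = (4+4*z)/(4+z) by field_simp; ring,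
          Real.log_div (by linarith) (by linarith)]
      rw [h1]; exact log_cubic ha
    have key : 4*(1+z)*(a - a^2/2 + a^3/3) + 4*(1-z)*(z/4 - (z/4)^2/2 + (z/4)^3/3) ≤ 4*z := by
      have heq : 4*z - (4*(1+z)*(a - a^2/2 + a^3/3) + 4*(1-z)*(z/4 - (z/4)^2/2 + (z/4)^3/3))
          = z^3*(5120 - 3680*z + 72*z^2 + 20*z^3 + 4*z^4) / (192*(4+z)^3) := by
        rw [ha_def]; field_simp; ring
      have hnum : (0:ℝ) ≤ z^3*(5120 - 3680*z + 72*z^2 + 20*z^3 + 4*z^4) := by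
        apply mul_nonneg (pow_nonneg hz0 3)
        nlinarith [pow_nonneg hz0 2, pow_nonneg hz0 3, pow_nonneg hz0 4]
      nlinarith [div_nonneg hnum (by positivity : (0:ℝ) ≤ 192*(4+z)^3)]
    have hm1 := mul_le_mul_of_nonneg_left hloga (by linarith : (0:ℝ) ≤ 4*(1+z))
    have hm2 := mul_le_mul_of_nonneg_left hlogb (by linarith : (0:ℝ) ≤ 4*(1-z))
    linarith
end

section
/- Define h(σ) = 4/(4+σ). For every z with 0 ≤ z ≤ 1: ∫_z^1 max{0, h(σ) − 1 + z·h(σ)} dσ ≤ ∫_0^z (1 − h(σ) + z·h(σ)) dσ. -/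
open intervalIntegral MeasureTheory

lemma poly_int (c0 c1 c2 d e : ℝ) :
    ∫ σ in d..e, (c0 + c1*σ + c2*σ^2) =
      (c0*e + c1/2*e^2 + c2/3*e^3) - (c0*d + c1/2*d^2 + c2/3*d^3) := by
  have hder : ∀ x ∈ Set.uIcc d e,
      HasDerivAt (fun x : ℝ => c0 * x + c1/2 * x^2 + c2/3 * x^3) (c0 + c1*x + c2*x^2) x := by
    intro x _
    have h1 : HasDerivAt (fun x:ℝ => x) 1 x := hasDerivAt_id x
    have h2 : HasDerivAt (fun x:ℝ => x^2) (2*x) x := by simpa using hasDerivAt_pow 2 x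
    have h3 : HasDerivAt (fun x:ℝ => x^3) (3*x^2) x := by simpa using hasDerivAt_pow 3 x
    have H := ((h1.const_mul c0).add (h2.const_mul (c1/2))).add (h3.const_mul (c2/3))
    refine H.congr_deriv ?_
    ring
  have hint : IntervalIntegrable (fun σ : ℝ => c0 + c1*σ + c2*σ^2) MeasureTheory.volume d e :=
    (by continuity : Continuous fun σ : ℝ => c0 + c1*σ + c2*σ^2).intervalIntegrable d e
  simpa using intervalIntegral.integral_eq_sub_of_hasDerivAt hder hint

set_option maxHeartbeats 2000000 in
theorem stmt_19 (h : ℝ → ℝ) (hh : ∀ σ, h σ = 4 / (4 + σ))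
    (z : ℝ) (hz0 : 0 ≤ z) (hz1 : z ≤ 1) :
    (∫ σ in z..1, max 0 (h σ - 1 + z * h σ)) ≤ ∫ σ in (0:ℝ)..z, (1 - h σ + z * h σ) := by
  simp only [hh]
  -- the polynomial majorant q σ = z - (1+z)σ/4 + (1+z)σ²/16
  set f2 : ℝ → ℝ := fun σ => max 0 (z + (-(1+z)/4)*σ + ((1+z)/16)*σ^2) with hf2
  have hcont2 : Continuous f2 := by
    apply (continuous_const.max continuous_id).comp
    continuity
  have hint2 : ∀ a b : ℝ, IntervalIntegrable f2 volume a b :=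
    fun a b => hcont2.intervalIntegrable a b
  have hintpoly : ∀ c0 c1 c2 a b : ℝ,
      IntervalIntegrable (fun σ : ℝ => c0 + c1*σ + c2*σ^2) volume a b := by
    intro c0 c1 c2 a b
    exact (by continuity : Continuous fun σ : ℝ => c0 + c1*σ + c2*σ^2).intervalIntegrable a b
  -- Step 1: bound the LHS integrand by the polynomial majorant
  have hcont1 : ContinuousOn (fun σ : ℝ => max 0 (4/(4+σ) - 1 + z * (4/(4+σ)))) (Set.uIcc z 1) := by
    have hne : ∀ x ∈ Set.uIcc z 1, (4:ℝ) + x ≠ 0 := by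
      intro x hx
      rcases Set.mem_uIcc.1 hx with h | h
      · nlinarith [h.1]
      · nlinarith [h.1]
    have hc : ContinuousOn (fun σ:ℝ => 4/(4+σ)) (Set.uIcc z 1) :=
      ContinuousOn.div continuousOn_const (by fun_prop) hne
    exact (continuous_const.max continuous_id).comp_continuousOn
      (((hc.sub continuousOn_const).add (continuousOn_const.mul hc)))
  have step1 : (∫ σ in z..1, max 0 (4/(4+σ) - 1 + z * (4/(4+σ)))) ≤ ∫ σ in z..1, f2 σ := by
    apply intervalIntegral.integral_mono_on hz1 (hcont1.intervalIntegrable) (hint2 z 1)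
    intro σ hσ
    have hσ0 : 0 ≤ σ := le_trans hz0 hσ.1
    have hσ1 : σ ≤ 1 := hσ.2
    have h4 : (0:ℝ) < 4 + σ := by linarith
    have hkey : 4/(4+σ) ≤ 1 - σ/4 + σ^2/16 := by
      rw [div_le_iff₀ h4]
      nlinarith [mul_nonneg (mul_nonneg hσ0 hσ0) hσ0]
    apply max_le_max (le_refl (0:ℝ))
    have e1 : 4/(4+σ) - 1 + z*(4/(4+σ)) = (1+z)*(4/(4+σ)) - 1 := by ring
    rw [e1]
    have hm := mul_le_mul_of_nonneg_left hkey (show (0:ℝ) ≤ 1+z by linarith)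
    nlinarith [hm]
  -- Step 2: bound the RHS integrand from below
  have step2 : (∫ σ in (0:ℝ)..z, (z + ((1-z)/4)*σ + (-(1-z)/16)*σ^2)) ≤
      ∫ σ in (0:ℝ)..z, (1 - 4/(4+σ) + z * (4/(4+σ))) := by
    have hne : ∀ x ∈ Set.uIcc (0:ℝ) z, (4:ℝ) + x ≠ 0 := by
      intro x hx
      rcases Set.mem_uIcc.1 hx with h | h
      · nlinarith [h.1]
      · nlinarith [h.1, hz0]
    have hc : ContinuousOn (fun σ:ℝ => 4/(4+σ)) (Set.uIcc (0:ℝ) z) :=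
      ContinuousOn.div continuousOn_const (by fun_prop) hne
    apply intervalIntegral.integral_mono_on hz0 (hintpoly _ _ _ _ _)
      (((continuousOn_const.sub hc).add (continuousOn_const.mul hc)).intervalIntegrable)
    intro σ hσ
    have hσ0 : 0 ≤ σ := hσ.1
    have hσ1 : σ ≤ 1 := le_trans hσ.2 hz1
    have h4 : (0:ℝ) < 4 + σ := by linarith
    have hkey : 4/(4+σ) ≤ 1 - σ/4 + σ^2/16 := by
      rw [div_le_iff₀ h4]
      nlinarith [mul_nonneg (mul_nonneg hσ0 hσ0) hσ0]
    have e1 : 1 - 4/(4+σ) + z*(4/(4+σ)) = 1 - (1-z)*(4/(4+σ)) := by ring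
    simp only [Pi.add_apply, Pi.sub_apply, Pi.mul_apply]
    rw [e1]
    have hm := mul_le_mul_of_nonneg_left hkey (show (0:ℝ) ≤ 1-z by linarith)
    nlinarith [hm]
  have hR : (∫ σ in (0:ℝ)..z, (z + ((1-z)/4)*σ + (-(1-z)/16)*σ^2)) =
      (z*z + ((1-z)/4)/2*z^2 + (-(1-z)/16)/3*z^3) - (z*0 + ((1-z)/4)/2*0^2 + (-(1-z)/16)/3*0^3) :=
    poly_int _ _ _ _ _
  -- generic middle bound with breakpoint m
  have main : ∀ m : ℝ, z ≤ m → m ≤ 1 → (z + (-(1+z)/4)*m + ((1+z)/16)*m^2 ≤ 0) →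
      (∫ σ in z..1, f2 σ) ≤
        (((z - (z + (-(1+z)/4)*m + ((1+z)/16)*m^2))*m + (-(1+z)/4)/2*m^2 + ((1+z)/16)/3*m^3)
          - ((z - (z + (-(1+z)/4)*m + ((1+z)/16)*m^2))*z + (-(1+z)/4)/2*z^2 + ((1+z)/16)/3*z^3)) := by
    intro m hzm hm1 hQm
    have hsplit : (∫ σ in z..1, f2 σ) = (∫ σ in z..m, f2 σ) + ∫ σ in m..1, f2 σ :=
      (intervalIntegral.integral_add_adjacent_intervals (hint2 z m) (hint2 m 1)).symm
    have hb1 : (∫ σ in z..m, f2 σ) ≤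
        ∫ σ in z..m, ((z - (z + (-(1+z)/4)*m + ((1+z)/16)*m^2)) + (-(1+z)/4)*σ + ((1+z)/16)*σ^2) := by
      apply intervalIntegral.integral_mono_on hzm (hint2 z m) (hintpoly _ _ _ _ _)
      intro σ hσ
      have hσz : z ≤ σ := hσ.1
      have hσm : σ ≤ m := hσ.2
      apply max_le
      · nlinarith [mul_nonneg (mul_nonneg (show (0:ℝ) ≤ 1+z by linarith)
          (sub_nonneg.2 hσm)) (show (0:ℝ) ≤ 4 - σ - m by linarith)]
      · linarith
    have hb2 : (∫ σ in m..1, f2 σ) ≤ 0 := by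
      have : (∫ σ in m..1, f2 σ) ≤ ∫ σ in m..1, (0:ℝ) := by
        apply intervalIntegral.integral_mono_on hm1 (hint2 m 1)
          (intervalIntegrable_const)
        intro σ hσ
        have hσm : m ≤ σ := hσ.1
        have hσ1 : σ ≤ 1 := hσ.2
        apply max_le le_rfl
        nlinarith [mul_nonneg (mul_nonneg (show (0:ℝ) ≤ 1+z by linarith)
          (sub_nonneg.2 hσm)) (show (0:ℝ) ≤ 4 - σ - m by linarith), hQm]
      simpa using this
    rw [hsplit]
    calc (∫ σ in z..m, f2 σ) + ∫ σ in m..1, f2 σ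
        ≤ (∫ σ in z..m, ((z - (z + (-(1+z)/4)*m + ((1+z)/16)*m^2)) + (-(1+z)/4)*σ + ((1+z)/16)*σ^2)) + 0 :=
          add_le_add hb1 hb2
      _ = _ := by rw [add_zero, poly_int]
  refine le_trans step1 (le_trans ?_ step2)
  rw [hR]
  rcases le_or_gt z (1/5) with hz5 | hz5
  · -- Case A : m = 4z + 6z³
    have haux : (0:ℝ) ≤ 8 - 24*z - 48*z^2 - 36*z^3 - 36*z^4 := by
      nlinarith [mul_nonneg (sub_nonneg.2 hz5) hz0, mul_nonneg (mul_nonneg (sub_nonneg.2 hz5) hz0) hz0,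
        mul_nonneg (mul_nonneg (mul_nonneg (sub_nonneg.2 hz5) hz0) hz0) hz0]
    have hQm : z + (-(1+z)/4)*(4*z+6*z^3) + ((1+z)/16)*(4*z+6*z^3)^2 ≤ 0 := by
      nlinarith [mul_nonneg (mul_nonneg (mul_nonneg hz0 hz0) hz0) haux]
    have hzm : z ≤ 4*z+6*z^3 := by nlinarith [mul_nonneg (mul_nonneg hz0 hz0) hz0]
    have hm1 : 4*z+6*z^3 ≤ 1 := by
      nlinarith [mul_nonneg (sub_nonneg.2 hz5) hz0, mul_nonneg (mul_nonneg (sub_nonneg.2 hz5) hz0) hz0,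
        mul_nonneg (mul_nonneg (mul_nonneg (sub_nonneg.2 hz5) hz0) hz0) hz0]
    refine le_trans (main (4*z+6*z^3) hzm hm1 hQm) ?_
    nlinarith [sq_nonneg z, sq_nonneg (z^2), sq_nonneg (z^3), mul_nonneg hz0 hz0, sq_nonneg (1/5-z),
      mul_nonneg (mul_nonneg hz0 hz0) hz0, mul_nonneg (sub_nonneg.2 hz5) hz0,
      mul_nonneg (mul_nonneg (sub_nonneg.2 hz5) hz0) hz0]
  · rcases le_or_gt z (3/13) with hz13 | hz13
    · -- Case B : m = 17/20 + 39/8*(z-1/5)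
      have hz5' : 1/5 ≤ z := le_of_lt hz5
      have hQm : z + (-(1+z)/4)*(17/20+39/8*(z-1/5)) + ((1+z)/16)*(17/20+39/8*(z-1/5))^2 ≤ 0 := by
        nlinarith [sq_nonneg (z-1/5), sq_nonneg (3/13-z), mul_nonneg (sub_nonneg.2 hz5') (sub_nonneg.2 hz13),
          mul_nonneg (mul_nonneg (sub_nonneg.2 hz5') (sub_nonneg.2 hz13)) (sub_nonneg.2 hz13)]
      have hzm : z ≤ 17/20+39/8*(z-1/5) := by linarith
      have hm1 : 17/20+39/8*(z-1/5) ≤ 1 := by linarith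
      refine le_trans (main _ hzm hm1 hQm) ?_
      nlinarith [sq_nonneg (z-1/5), sq_nonneg (3/13-z), mul_nonneg (sub_nonneg.2 hz5') (sub_nonneg.2 hz13),
        sq_nonneg z, mul_nonneg (mul_nonneg (sub_nonneg.2 hz5') (sub_nonneg.2 hz13)) (sub_nonneg.2 hz13),
        mul_nonneg (mul_nonneg (sub_nonneg.2 hz5') (sub_nonneg.2 hz5')) (sub_nonneg.2 hz13)]
    · -- Case C : q ≥ 0 on [z,1]
      have hz13' : 3/13 ≤ z := le_of_lt hz13
      have hC : (∫ σ in z..1, f2 σ) ≤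
          ∫ σ in z..1, (z + (-(1+z)/4)*σ + ((1+z)/16)*σ^2) := by
        apply intervalIntegral.integral_mono_on hz1 (hint2 z 1) (hintpoly _ _ _ _ _)
        intro σ hσ
        have hσz : z ≤ σ := hσ.1
        have hσ1 : σ ≤ 1 := hσ.2
        apply max_le _ le_rfl
        nlinarith [mul_nonneg (mul_nonneg (show (0:ℝ) ≤ 1+z by linarith)
          (sub_nonneg.2 hσ1)) (show (0:ℝ) ≤ 3 - σ by linarith)]
      refine le_trans hC ?_
      rw [poly_int]
      nlinarith [mul_nonneg (sub_nonneg.2 hz13') (sub_nonneg.2 hz1), sq_nonneg (z-3/13), sq_nonneg (1-z),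
        mul_nonneg (mul_nonneg (sub_nonneg.2 hz13') (sub_nonneg.2 hz1)) (sub_nonneg.2 hz1),
        mul_nonneg (mul_nonneg (sub_nonneg.2 hz13') (sub_nonneg.2 hz13')) (sub_nonneg.2 hz1),
        sq_nonneg (z - 1/4)]
end
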